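/- arXiv:2309.10590 — 2 statements merged into one kernel-verified Lean document; each statement's English description precedes it below -/
import Mathlib

section
/- Let B and W be disjoint finsets of a type α with decidable equality, and let S ⊆ B ∪ W. Then at least one of the four finsets S, S ∆ B, S ∆ W, S ∆ (B ∪ W) has cardinality at most half of |B ∪ W|; i.e., there exists T ∈ {S, S ∆ B, S ∆ W, S ∆ (B ∪ W)} with 2·|T| ≤ |B ∪ W|. -/
open scoped symmDiff

theorem exists_bw_complement_small {α : Type*} [DecidableEq α]
    (B W S : Finset α) (hBW : Disjoint B W) (hS : S ⊆ B ∪ W) :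
    ∃ T ∈ ({S, S ∆ B, S ∆ W, S ∆ (B ∪ W)} : Set (Finset α)),
      2 * T.card ≤ (B ∪ W).card := by
  by_cases h : 2 * S.card ≤ (B ∪ W).card
  · exact ⟨S, by simp, h⟩
  · refine ⟨S ∆ (B ∪ W), by simp, ?_⟩
    rw [symmDiff_of_le hS, Finset.card_sdiff_of_subset hS]
    have := Finset.card_le_card hS
    omega
end

section
/- Let B and W be disjoint finsets of a type α with decidable equality, and let S ⊆ B ∪ W. If 2·|S ∩ B| ≠ |B| or 2·|S ∩ W| ≠ |W| (i.e., S is not equilibrium), then there exists T ∈ {S, S ∆ B, S ∆ W, S ∆ (B ∪ W)} with 2·|T| < |B ∪ W|. -/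
open scoped symmDiff

theorem exists_bw_complement_lt_of_not_equilibrium {α : Type*} [DecidableEq α]
    (B W S : Finset α) (hBW : Disjoint B W) (hS : S ⊆ B ∪ W)
    (h : 2 * (S ∩ B).card ≠ B.card ∨ 2 * (S ∩ W).card ≠ W.card) :
    ∃ T ∈ ({S, S ∆ B, S ∆ W, S ∆ (B ∪ W)} : Set (Finset α)),
      2 * T.card < (B ∪ W).card := by
  have hSB : S \ B = S ∩ W := by
    ext x
    simp only [Finset.mem_sdiff, Finset.mem_inter]
    constructor
    · rintro ⟨hx, hnb⟩
      have := hS hx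
      simp only [Finset.mem_union] at this
      exact ⟨hx, this.resolve_left hnb⟩
    · rintro ⟨hx, hw⟩
      exact ⟨hx, fun hb => (Finset.disjoint_left.1 hBW) hb hw⟩
  have hSW : S \ W = S ∩ B := by
    ext x
    simp only [Finset.mem_sdiff, Finset.mem_inter]
    constructor
    · rintro ⟨hx, hnw⟩
      have := hS hx
      simp only [Finset.mem_union] at this
      exact ⟨hx, this.resolve_right hnw⟩
    · rintro ⟨hx, hb⟩
      exact ⟨hx, fun hw => (Finset.disjoint_left.1 hBW) hb hw⟩
  set a := (S ∩ B).card with ha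
  set b := (S ∩ W).card with hb
  have hab : Disjoint (S ∩ B) (S ∩ W) :=
    hBW.mono Finset.inter_subset_right Finset.inter_subset_right
  have hU : (B ∪ W).card = B.card + W.card := Finset.card_union_of_disjoint hBW
  have h1 : S.card = a + b := by
    have : S = (S ∩ B) ∪ (S ∩ W) := by
      rw [← Finset.inter_union_distrib_left, Finset.inter_eq_left.2 hS]
    rw [this, Finset.card_union_of_disjoint hab]
  have hBSa : (B \ S).card + a = B.card := by
    have : a = (B ∩ S).card := by rw [ha, Finset.inter_comm]
    rw [this, Finset.card_sdiff_add_card_inter]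
  have hWSb : (W \ S).card + b = W.card := by
    have : b = (W ∩ S).card := by rw [hb, Finset.inter_comm]
    rw [this, Finset.card_sdiff_add_card_inter]
  have h2 : (S ∆ B).card + a = B.card + b := by
    rw [symmDiff_def]
    have hd : Disjoint (S \ B) (B \ S) := disjoint_sdiff_sdiff
    rw [Finset.sup_eq_union, Finset.card_union_of_disjoint hd, hSB]
    omega
  have h3 : (S ∆ W).card + b = W.card + a := by
    rw [symmDiff_def]
    have hd : Disjoint (S \ W) (W \ S) := disjoint_sdiff_sdiff
    rw [Finset.sup_eq_union, Finset.card_union_of_disjoint hd, hSW]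
    omega
  have h4 : (S ∆ (B ∪ W)).card + (a + b) = B.card + W.card := by
    have hss : S ∆ (B ∪ W) = (B ∪ W) \ S := by
      rw [symmDiff_def, Finset.sup_eq_union, Finset.sdiff_eq_empty_iff_subset.2 hS,
        Finset.empty_union]
    rw [hss, ← h1, Finset.card_sdiff_add_card_eq_card hS, hU]
  rcases le_or_gt (2 * a) B.card with hca | hca <;>
    rcases le_or_gt (2 * b) W.card with hcb | hcb
  · exact ⟨S, by simp, by omega⟩
  · exact ⟨S ∆ W, by simp, by omega⟩
  · exact ⟨S ∆ B, by simp, by omega⟩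
  · exact ⟨S ∆ (B ∪ W), by simp, by omega⟩
end
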